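/- Let λ be a regular uncountable cardinal, ⟨θ_ε : ε < λ⟩ a sequence of infinite cardinals below λ, and F : ^λ2 → ∏_{ε<λ} θ_ε the block-coding map. Then for every subset U of ∏_{ε<λ} θ_ε which is nowhere dense in the <λ-box topology, the preimage F^{-1}(U) is nowhere dense in ^λ2 with the <λ-box topology. -/

import Mathlib

open Cardinal Set

/-- The type of ordinals below `o`, serving as the domain `λ` (for `o = λ.ord`). -/
abbrev Blw (o : Ordinal.{0}) := {α : Ordinal.{0} // α < o}

/-- The space `^λ2` of functions from `λ` to `2` (for `o = λ.ord`). -/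
abbrev CSp (o : Ordinal.{0}) := Blw o → Bool

/-- The cylinder `[ν] = {η ∈ ^λ2 : ν ⊴ η}` determined by `ν : β → 2`, `β < o`. -/
def cylC (o β : Ordinal.{0}) (ν : Blw β → Bool) : Set (CSp o) :=
  {η | ∀ (α : Ordinal.{0}) (hβ : α < β) (ho : α < o), η ⟨α, ho⟩ = ν ⟨α, hβ⟩}

/-- The `<λ`-box topology on `^λ2`: generated by the cylinders `[ν]`, `ν : β → 2`,
`β < o` (its open sets are exactly the unions of such cylinders). -/
def boxC (o : Ordinal.{0}) : TopologicalSpace (CSp o) :=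
  TopologicalSpace.generateFrom
    {S | ∃ β : Ordinal.{0}, β < o ∧ ∃ ν : Blw β → Bool, S = cylC o β ν}

/-- The product `∏_{ζ<λ} θ_ζ` (for `o = λ.ord`), as the set of functions
`η : λ → Ord` with `η ζ < θ ζ` for all `ζ < λ`. -/
def PSp (o : Ordinal.{0}) (θ : Blw o → Cardinal.{0}) : Type 1 :=
  {η : Blw o → Ordinal.{0} // ∀ ζ, η ζ < (θ ζ).ord}

/-- The cylinder `[ν] = {η ∈ ∏_{ζ<λ} θ_ζ : ν ⊴ η}` determined by
`ν : ∏_{ζ<β} θ_ζ`, `β < o`. -/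
def cylP (o : Ordinal.{0}) (θ : Blw o → Cardinal.{0}) (β : Ordinal.{0})
    (ν : Blw β → Ordinal.{0}) : Set (PSp o θ) :=
  {η | ∀ (α : Ordinal.{0}) (hβ : α < β) (ho : α < o), η.1 ⟨α, ho⟩ = ν ⟨α, hβ⟩}

/-- The `<λ`-box topology on `∏_{ζ<λ} θ_ζ`: generated by the cylinders `[ν]`,
`ν ∈ ∏_{ζ<β} θ_ζ`, `β < o` (its open sets are exactly the unions of such
cylinders). -/
def boxP (o : Ordinal.{0}) (θ : Blw o → Cardinal.{0}) : TopologicalSpace (PSp o θ) :=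
  TopologicalSpace.generateFrom
    {S | ∃ β : Ordinal.{0}, β < o ∧ ∃ ν : Blw β → Ordinal.{0},
      (∀ (α : Ordinal.{0}) (hβ : α < β) (ho : α < o), ν ⟨α, hβ⟩ < (θ ⟨α, ho⟩).ord) ∧
      S = cylP o θ β ν}
/-- `blockSum t ε = Σ_{ζ<ε} t ζ` (ordinal sum): `0` at `0`, `blockSum t δ + t δ`
at `δ+1`, and the supremum at limits. -/
noncomputable def blockSum (t : Ordinal.{0} → Ordinal.{0}) (ε : Ordinal.{0}) : Ordinal.{0} :=
  Ordinal.limitRecOn ε 0 (fun δ ih => ih + t δ)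
    (fun δ _ ih => ⨆ β : Set.Iio δ, ih β.1 β.2)

/-- `sFn lam θ ε = s(ε) = Σ_{ζ<ε} θ_ζ` (ordinal sum). -/
noncomputable def sFn (lam : Cardinal.{0}) (θ : Blw lam.ord → Cardinal.{0}) :
    Ordinal.{0} → Ordinal.{0} :=
  blockSum (fun ζ => if h : ζ < lam.ord then (θ ⟨ζ, h⟩).ord else 0)

/-- `F : ^λ2 → ∏_{ε<λ} θ_ε` is the block-coding map: `F(η)(ε) = 0` if
`η(s(ε)+i) = 0` for all `i < θ_ε`, and `F(η)(ε) = 1+i` for the least `i < θ_ε`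
with `η(s(ε)+i) = 1` otherwise. -/
def FSpec (lam : Cardinal.{0}) (θ : Blw lam.ord → Cardinal.{0})
    (F : CSp lam.ord → PSp lam.ord θ) : Prop :=
  ∀ (η : CSp lam.ord) (ε : Blw lam.ord),
    ((∀ i < (θ ε).ord, ∀ h : sFn lam θ ε.1 + i < lam.ord,
        η ⟨sFn lam θ ε.1 + i, h⟩ = false) → (F η).1 ε = 0) ∧
    (∀ i < (θ ε).ord, ∀ h : sFn lam θ ε.1 + i < lam.ord,
        η ⟨sFn lam θ ε.1 + i, h⟩ = true →
        (∀ j < i, ∀ h' : sFn lam θ ε.1 + j < lam.ord,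
          η ⟨sFn lam θ ε.1 + j, h'⟩ = false) →
        (F η).1 ε = 1 + i)

section BlockCodingAux

open TopologicalSpace

lemma bc_add_lt_ord {lam : Cardinal.{0}} (hlam : ℵ₀ ≤ lam) {a b : Ordinal.{0}}
    (ha : a < lam.ord) (hb : b < lam.ord) : a + b < lam.ord := by
  rw [Cardinal.lt_ord] at ha hb ⊢
  rw [Ordinal.card_add]
  exact Cardinal.add_lt_of_lt hlam ha hb

lemma blockSum_zero (t : Ordinal.{0} → Ordinal.{0}) : blockSum t 0 = 0 :=
  Ordinal.limitRecOn_zero _ _ _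

lemma blockSum_succ (t : Ordinal.{0} → Ordinal.{0}) (δ : Ordinal.{0}) :
    blockSum t (δ + 1) = blockSum t δ + t δ := by
  unfold blockSum
  rw [Ordinal.add_one_eq_succ, Ordinal.limitRecOn_succ]

lemma blockSum_limit (t : Ordinal.{0} → Ordinal.{0}) {δ : Ordinal.{0}} (h : Order.IsSuccLimit δ) :
    blockSum t δ = ⨆ β : Set.Iio δ, blockSum t β.1 := by
  unfold blockSum
  rw [Ordinal.limitRecOn_limit _ _ _ _ h]

lemma blockSum_mono (t : Ordinal.{0} → Ordinal.{0}) (ε : Ordinal.{0}) :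
    ∀ ζ ≤ ε, blockSum t ζ ≤ blockSum t ε := by
  induction ε using Ordinal.limitRecOn with
  | zero => intro ζ hζ; rw [nonpos_iff_eq_zero.mp hζ]
  | add_one δ ih =>
    intro ζ hζ
    rcases eq_or_lt_of_le hζ with rfl | h'
    · exact le_rfl
    · have h1 : blockSum t ζ ≤ blockSum t δ := ih ζ (Order.lt_succ_iff.mp h')
      have h2 : blockSum t (Order.succ δ) = blockSum t δ + t δ := by
        rw [← Ordinal.add_one_eq_succ, blockSum_succ]
      rw [← Order.succ_eq_add_one, h2]
      exact h1.trans (le_self_add)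
  | limit δ hlim ih =>
    intro ζ hζ
    rcases eq_or_lt_of_le hζ with rfl | h'
    · exact le_rfl
    · rw [blockSum_limit t hlim]
      exact Ordinal.le_iSup (fun β : Set.Iio δ => blockSum t β.1) ⟨ζ, h'⟩

lemma le_blockSum (t : Ordinal.{0} → Ordinal.{0}) (ε : Ordinal.{0}) :
    (∀ ζ < ε, 1 ≤ t ζ) → ε ≤ blockSum t ε := by
  induction ε using Ordinal.limitRecOn with
  | zero => intro _; rw [blockSum_zero]
  | add_one δ ih =>
    intro h1
    have h2 : blockSum t (Order.succ δ) = blockSum t δ + t δ := by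
      rw [← Ordinal.add_one_eq_succ, blockSum_succ]
    rw [← Order.succ_eq_add_one, h2, ← Ordinal.add_one_eq_succ]
    exact add_le_add (ih fun ζ hζ => h1 ζ (hζ.trans (Order.lt_succ δ)))
      (h1 δ (Order.lt_succ δ))
  | limit δ hlim ih =>
    intro h1
    by_contra hc
    push_neg at hc
    set c := blockSum t δ with hcdef
    have hc1 : c + 1 < δ := by
      rw [Ordinal.add_one_eq_succ]; exact hlim.succ_lt hc
    have h2 : c + 1 ≤ blockSum t (c + 1) :=
      ih (c + 1) hc1 (fun ζ hζ => h1 ζ (hζ.trans hc1))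
    have h3 : blockSum t (c + 1) ≤ c := blockSum_mono t δ (c + 1) hc1.le
    have := h2.trans h3
    simp at this

lemma sFn_succ {lam : Cardinal.{0}} {θ : Blw lam.ord → Cardinal.{0}} {δ : Ordinal.{0}}
    (hδ : δ < lam.ord) :
    sFn lam θ (δ + 1) = sFn lam θ δ + (θ ⟨δ, hδ⟩).ord := by
  rw [sFn, blockSum_succ, dif_pos hδ]

lemma sFn_mono {lam : Cardinal.{0}} {θ : Blw lam.ord → Cardinal.{0}} {ζ ε : Ordinal.{0}}
    (h : ζ ≤ ε) : sFn lam θ ζ ≤ sFn lam θ ε :=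
  blockSum_mono _ ε ζ h

lemma sFn_succ_le {lam : Cardinal.{0}} {θ : Blw lam.ord → Cardinal.{0}} {ζ ε : Ordinal.{0}}
    (hζε : ζ < ε) (hζ : ζ < lam.ord) :
    sFn lam θ ζ + (θ ⟨ζ, hζ⟩).ord ≤ sFn lam θ ε := by
  rw [← sFn_succ hζ]
  exact sFn_mono (by rwa [Ordinal.add_one_eq_succ, Order.succ_le_iff])

lemma sFn_lt {lam : Cardinal.{0}} {θ : Blw lam.ord → Cardinal.{0}} (hreg : lam.IsRegular)
    (hθ : ∀ ζ, ℵ₀ ≤ θ ζ ∧ θ ζ < lam) (ε : Ordinal.{0}) :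
    ε < lam.ord → sFn lam θ ε < lam.ord := by
  have hpos : (0 : Ordinal.{0}) < lam.ord := by
    rw [Cardinal.lt_ord, Ordinal.card_zero]
    exact aleph0_pos.trans_le hreg.aleph0_le
  induction ε using Ordinal.limitRecOn with
  | zero => intro _; rw [sFn, blockSum_zero]; exact hpos
  | add_one δ ih =>
    intro hδ1
    have hδ : δ < lam.ord := (Order.le_succ δ).trans_lt hδ1
    rw [sFn, blockSum_succ, dif_pos hδ]
    exact bc_add_lt_ord hreg.aleph0_le (ih hδ) (Cardinal.ord_lt_ord.mpr (hθ _).2)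
  | limit δ hlim ih =>
    intro hδ
    rw [sFn, blockSum_limit _ hlim]
    set f : Set.Iio δ → Ordinal.{0} :=
      fun β => blockSum (fun ζ => if h : ζ < lam.ord then (θ ⟨ζ, h⟩).ord else 0) β.1 with hf
    set e := equivShrink (Set.Iio δ) with he
    have hflt : ∀ β : Set.Iio δ, f β < lam.ord := fun β => ih β.1 β.2 (β.2.trans hδ)
    have hcard : #(Shrink.{0} (Set.Iio δ)) < (lam.ord).cof := by
      rw [hreg.cof_eq]
      have h1 : Cardinal.lift.{1} #(Shrink.{0} (Set.Iio δ)) = #(Set.Iio δ) :=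
        Cardinal.lift_mk_shrink''.{1, 0} (Set.Iio δ)
      rw [Ordinal.mk_Iio_ordinal] at h1
      have h2 : #(Shrink.{0} (Set.Iio δ)) = δ.card := Cardinal.lift_inj.mp h1
      rw [h2, ← Cardinal.lt_ord]
      exact hδ
    have hlt : ⨆ i, (f ∘ e.symm) i < lam.ord :=
      Ordinal.iSup_lt_ord hcard (fun i => hflt _)
    refine lt_of_le_of_lt ?_ hlt
    refine Ordinal.iSup_le_iff.mpr fun β => ?_
    have : f β = (f ∘ e.symm) (e β) := by simp
    change f β ≤ _
    rw [this]
    exact Ordinal.le_iSup (f ∘ e.symm) (e β)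

lemma le_sFn {lam : Cardinal.{0}} {θ : Blw lam.ord → Cardinal.{0}}
    (hθ : ∀ ζ, ℵ₀ ≤ θ ζ ∧ θ ζ < lam) {ε : Ordinal.{0}} (hε : ε < lam.ord) :
    ε ≤ sFn lam θ ε := by
  refine le_blockSum _ ε fun ζ hζ => ?_
  rw [dif_pos (hζ.trans hε)]
  rw [← Cardinal.ord_one]
  exact Cardinal.ord_le_ord.mpr (le_trans (le_of_lt one_lt_aleph0) (hθ _).1)

lemma bc_pos_lt {lam : Cardinal.{0}} {θ : Blw lam.ord → Cardinal.{0}} (hreg : lam.IsRegular)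
    (hθ : ∀ ζ, ℵ₀ ≤ θ ζ ∧ θ ζ < lam) {ζ i : Ordinal.{0}} (hζ : ζ < lam.ord)
    (hi : i < (θ ⟨ζ, hζ⟩).ord) : sFn lam θ ζ + i < lam.ord :=
  bc_add_lt_ord hreg.aleph0_le (sFn_lt hreg hθ ζ hζ)
    (hi.trans (Cardinal.ord_lt_ord.mpr (hθ _).2))

lemma bc_pos_unique {lam : Cardinal.{0}} {θ : Blw lam.ord → Cardinal.{0}}
    {ζ ζ' i i' : Ordinal.{0}} (hζ : ζ < lam.ord) (hζ' : ζ' < lam.ord)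
    (hi : i < (θ ⟨ζ, hζ⟩).ord) (hi' : i' < (θ ⟨ζ', hζ'⟩).ord)
    (he : sFn lam θ ζ + i = sFn lam θ ζ' + i') : ζ = ζ' ∧ i = i' := by
  have key : ∀ (a b x y : Ordinal.{0}) (ha : a < lam.ord) (hb : b < lam.ord),
      a < b → x < (θ ⟨a, ha⟩).ord → sFn lam θ a + x ≠ sFn lam θ b + y := by
    intro a b x y ha hb hab hx heq
    have h1 : sFn lam θ a + x < sFn lam θ a + (θ ⟨a, ha⟩).ord := by
      exact (add_lt_add_iff_left _).mpr hx
    have h2 : sFn lam θ a + (θ ⟨a, ha⟩).ord ≤ sFn lam θ b := sFn_succ_le hab ha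
    have h3 : sFn lam θ b ≤ sFn lam θ b + y := le_self_add
    exact absurd heq (ne_of_lt (h1.trans_le (h2.trans h3)))
  rcases lt_trichotomy ζ ζ' with h | h | h
  · exact absurd he (key ζ ζ' i i' hζ hζ' h hi)
  · subst h
    exact ⟨rfl, (add_right_inj _).mp he⟩
  · exact absurd he.symm (key ζ' ζ i' i hζ' hζ h hi')

end BlockCodingAux
section BlockCodingAux2

open TopologicalSpace

lemma F_agree {lam : Cardinal.{0}} {θ : Blw lam.ord → Cardinal.{0}}
    {F : CSp lam.ord → PSp lam.ord θ} (hF : FSpec lam θ F)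
    (η η' : CSp lam.ord) (ζ : Blw lam.ord)
    (hag : ∀ i, i < (θ ζ).ord → ∀ h : sFn lam θ ζ.1 + i < lam.ord,
      η ⟨sFn lam θ ζ.1 + i, h⟩ = η' ⟨sFn lam θ ζ.1 + i, h⟩) :
    (F η).1 ζ = (F η').1 ζ := by
  by_cases hall : ∀ i < (θ ζ).ord, ∀ h : sFn lam θ ζ.1 + i < lam.ord,
      η ⟨sFn lam θ ζ.1 + i, h⟩ = false
  · rw [(hF η ζ).1 hall, (hF η' ζ).1 (fun i hi h => by rw [← hag i hi h]; exact hall i hi h)]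
  · push_neg at hall
    simp only [Bool.not_eq_false] at hall
    obtain ⟨i0, hi0, h0, hb0⟩ := hall
    set S : Set Ordinal.{0} := {i | ∃ hi : i < (θ ζ).ord, ∃ h : sFn lam θ ζ.1 + i < lam.ord,
      η ⟨sFn lam θ ζ.1 + i, h⟩ = true} with hSdef
    have hne : S.Nonempty := ⟨i0, hi0, h0, hb0⟩
    set m : Ordinal.{0} := Ordinal.lt_wf.min S hne with hmdef
    obtain ⟨hmθ, hmo, hmtrue⟩ := Ordinal.lt_wf.min_mem S hne
    have hleast : ∀ j, j < m → ∀ h' : sFn lam θ ζ.1 + j < lam.ord,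
        η ⟨sFn lam θ ζ.1 + j, h'⟩ = false := by
      intro j hj h'
      cases hv : η ⟨sFn lam θ ζ.1 + j, h'⟩ with
      | false => rfl
      | true =>
        have hjS : j ∈ S := ⟨hj.trans hmθ, h', hv⟩
        exact absurd hj (Ordinal.lt_wf.not_lt_min S hjS)
    have h1 : (F η).1 ζ = 1 + m := (hF η ζ).2 m hmθ hmo hmtrue hleast
    have h2 : (F η').1 ζ = 1 + m :=
      (hF η' ζ).2 m hmθ hmo (by rw [← hag m hmθ hmo]; exact hmtrue)
        (fun j hj h' => by rw [← hag j (hj.trans hmθ) h']; exact hleast j hj h')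
    rw [h1, h2]

lemma basisC {o : Ordinal.{0}} (ho : 0 < o) :
    @TopologicalSpace.IsTopologicalBasis (CSp o) (boxC o)
      {S | ∃ β : Ordinal.{0}, β < o ∧ ∃ ν : Blw β → Bool, S = cylC o β ν} := by
  letI := boxC o
  refine ⟨?_, ?_, rfl⟩
  · rintro t₁ ⟨β₁, hβ₁, ν₁, rfl⟩ t₂ ⟨β₂, hβ₂, ν₂, rfl⟩ x ⟨hx₁, hx₂⟩
    have hm : max β₁ β₂ < o := max_lt hβ₁ hβ₂
    refine ⟨cylC o (max β₁ β₂) (fun α => x ⟨α.1, α.2.trans hm⟩), ⟨_, hm, _, rfl⟩,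
      fun α hβ hoα => rfl, fun η hη => ⟨?_, ?_⟩⟩
    · intro α hβ hoα
      rw [hη α (hβ.trans_le (le_max_left _ _)) hoα]
      exact hx₁ α hβ hoα
    · intro α hβ hoα
      rw [hη α (hβ.trans_le (le_max_right _ _)) hoα]
      exact hx₂ α hβ hoα
  · refine Set.eq_univ_of_forall fun x => ?_
    refine Set.mem_sUnion.mpr ⟨cylC o 0 (fun α => ((zero_le (a := α.1)).not_gt α.2).elim),
      ⟨0, ho, _, rfl⟩, fun α hβ hoα => absurd hβ ((zero_le (a := α)).not_gt)⟩

lemma basisP {o : Ordinal.{0}} {θ : Blw o → Cardinal.{0}} (ho : 0 < o) :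
    @TopologicalSpace.IsTopologicalBasis (PSp o θ) (boxP o θ)
      {S | ∃ β : Ordinal.{0}, β < o ∧ ∃ ν : Blw β → Ordinal.{0},
        (∀ (α : Ordinal.{0}) (hβ : α < β) (ho : α < o), ν ⟨α, hβ⟩ < (θ ⟨α, ho⟩).ord) ∧
        S = cylP o θ β ν} := by
  letI := boxP o θ
  refine ⟨?_, ?_, rfl⟩
  · rintro t₁ ⟨β₁, hβ₁, ν₁, hb₁, rfl⟩ t₂ ⟨β₂, hβ₂, ν₂, hb₂, rfl⟩ x ⟨hx₁, hx₂⟩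
    have hm : max β₁ β₂ < o := max_lt hβ₁ hβ₂
    refine ⟨cylP o θ (max β₁ β₂) (fun α => x.1 ⟨α.1, α.2.trans hm⟩),
      ⟨_, hm, _, fun α hβ hoα => x.2 _, rfl⟩,
      fun α hβ hoα => rfl, fun η hη => ⟨?_, ?_⟩⟩
    · intro α hβ hoα
      rw [hη α (hβ.trans_le (le_max_left _ _)) hoα]
      exact hx₁ α hβ hoα
    · intro α hβ hoα
      rw [hη α (hβ.trans_le (le_max_right _ _)) hoα]
      exact hx₂ α hβ hoα
  · refine Set.eq_univ_of_forall fun x => ?_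
    refine Set.mem_sUnion.mpr ⟨cylP o θ 0 (fun α => ((zero_le (a := α.1)).not_gt α.2).elim),
      ⟨0, ho, _, fun α hβ hoα => absurd hβ ((zero_le (a := α)).not_gt), rfl⟩,
      fun α hβ hoα => absurd hβ ((zero_le (a := α)).not_gt)⟩

end BlockCodingAux2
/-- for `λ` regular uncountable, `⟨θ_ε : ε < λ⟩` infinite cardinals
below `λ`, and `F` the block-coding map, the preimage under `F` of any nowhere
dense subset of `∏_{ε<λ} θ_ε` is nowhere dense in `^λ2` (`<λ`-box topologies). -/
theorem blockCoding_preimage_nowhereDense (lam : Cardinal.{0}) (hreg : lam.IsRegular)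
    (hunc : ℵ₀ < lam) (θ : Blw lam.ord → Cardinal.{0})
    (hθ : ∀ ζ, ℵ₀ ≤ θ ζ ∧ θ ζ < lam)
    (F : CSp lam.ord → PSp lam.ord θ) (hF : FSpec lam θ F)
    (U : Set (PSp lam.ord θ)) (hU : @IsNowhereDense _ (boxP lam.ord θ) U) :
    @IsNowhereDense _ (boxC lam.ord) (F ⁻¹' U) := by
  classical
  letI : TopologicalSpace (CSp lam.ord) := boxC lam.ord
  letI : TopologicalSpace (PSp lam.ord θ) := boxP lam.ord θ
  have ho : (0 : Ordinal.{0}) < lam.ord := by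
    rw [Cardinal.lt_ord, Ordinal.card_zero]
    exact aleph0_pos.trans_le hreg.aleph0_le
  have hbC := basisC (o := lam.ord) ho
  have hbP := basisP (o := lam.ord) (θ := θ) ho
  show interior (closure (F ⁻¹' U)) = ∅
  rw [Set.eq_empty_iff_forall_notMem]
  intro x hx
  obtain ⟨t, ⟨β, hβ, ν, rfl⟩, hxt, hts⟩ := hbC.exists_subset_of_mem_open hx isOpen_interior
  have htcl : cylC lam.ord β ν ⊆ closure (F ⁻¹' U) := hts.trans interior_subset
  set η₀ : CSp lam.ord := (fun α => if h : α.1 < β then ν ⟨α.1, h⟩ else false) with hη₀def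
  set μ : Blw β → Ordinal.{0} := (fun ζ => (F η₀).1 ⟨ζ.1, ζ.2.trans hβ⟩) with hμdef
  have hμb : ∀ (α : Ordinal.{0}) (hβ' : α < β) (hoα : α < lam.ord),
      μ ⟨α, hβ'⟩ < (θ ⟨α, hoα⟩).ord := fun α hβ' hoα => (F η₀).2 _
  have hμopen : IsOpen (cylP lam.ord θ β μ) := hbP.isOpen ⟨β, hβ, μ, hμb, rfl⟩
  have hμmem : F η₀ ∈ cylP lam.ord θ β μ := by
    intro α hβ' hoα
    rw [hμdef]
  have hyex : ∃ y, y ∈ cylP lam.ord θ β μ ∧ y ∉ closure U := by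
    by_contra hc
    push_neg at hc
    have h1 : cylP lam.ord θ β μ ⊆ interior (closure U) :=
      hμopen.subset_interior_iff.mpr hc
    rw [hU] at h1
    exact h1 hμmem
  obtain ⟨y, hyμ, hyU⟩ := hyex
  obtain ⟨t₂, ⟨ε₂, hε₂, ρ, hρb, rfl⟩, hyt₂, ht₂sub⟩ :=
    hbP.exists_subset_of_mem_open hyU isClosed_closure.isOpen_compl
  set ε₁ : Ordinal.{0} := max β ε₂ with hε₁def
  have hε₁ : ε₁ < lam.ord := max_lt hβ hε₂
  have hsε₁ : sFn lam θ ε₁ < lam.ord := sFn_lt hreg hθ ε₁ hε₁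
  have hβsβ : β ≤ sFn lam θ β := le_sFn hθ hβ
  set η₁ : CSp lam.ord := (fun α =>
    if h : α.1 < β then ν ⟨α.1, h⟩
    else if (∃ ζ : Ordinal.{0}, ∃ hζ : ζ < lam.ord, β ≤ ζ ∧ ζ < ε₁ ∧
        ∃ i : Ordinal.{0}, ∃ _ : i < (θ ⟨ζ, hζ⟩).ord,
        α.1 = sFn lam θ ζ + i ∧ y.1 ⟨ζ, hζ⟩ = 1 + i) then true else false) with hη₁def
  have hf1 : ∀ (a : Ordinal.{0}) (h : a < lam.ord), a < sFn lam θ β →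
      η₁ ⟨a, h⟩ = η₀ ⟨a, h⟩ := by
    intro a h hasβ
    by_cases hab : a < β
    · simp only [hη₁def, hη₀def, dif_pos hab]
    · simp only [hη₁def, hη₀def, dif_neg hab]
      split_ifs with hP
      · obtain ⟨ζ, hζ, hβζ, hζε, i, hi, hae, -⟩ := hP
        rw [hae] at hasβ
        exact absurd hasβ (not_lt.mpr ((sFn_mono hβζ).trans (le_self_add)))
      · rfl
  have hf2 : ∀ (ζ : Ordinal.{0}) (hζ : ζ < lam.ord), β ≤ ζ → ζ < ε₁ →
      ∀ (i : Ordinal.{0}) (hi : i < (θ ⟨ζ, hζ⟩).ord) (h : sFn lam θ ζ + i < lam.ord),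
      η₁ ⟨sFn lam θ ζ + i, h⟩ = if y.1 ⟨ζ, hζ⟩ = 1 + i then true else false := by
    intro ζ hζ hβζ hζε i hi h
    have hnb : ¬ (sFn lam θ ζ + i < β) :=
      not_lt.mpr (le_trans (hβsβ.trans (sFn_mono hβζ)) (le_self_add))
    simp only [hη₁def, dif_neg hnb]
    split_ifs with hP hQ hQ
    · rfl
    · obtain ⟨ζ', hζ', hβζ', hζε', i', hi', heq, hy'⟩ := hP
      obtain ⟨hzz, hii⟩ := bc_pos_unique hζ hζ' hi hi' heq
      subst hzz
      subst hii
      exact absurd hy' hQ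
    · exact absurd ⟨ζ, hζ, hβζ, hζε, i, hi, rfl, hQ⟩ hP
    · rfl
  have hA : ∀ η : CSp lam.ord,
      (∀ (a : Ordinal.{0}) (h : a < lam.ord), a < sFn lam θ ε₁ → η ⟨a, h⟩ = η₁ ⟨a, h⟩) →
      ∀ (ζ : Ordinal.{0}) (hζ : ζ < lam.ord), ζ < ε₁ →
        (F η).1 ⟨ζ, hζ⟩ = y.1 ⟨ζ, hζ⟩ := by
    intro η hη ζ hζ hζε
    by_cases hζβ : ζ < β
    · have hblock : ∀ i, i < (θ (⟨ζ, hζ⟩ : Blw lam.ord)).ord →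
          ∀ h : sFn lam θ ζ + i < lam.ord,
          η ⟨sFn lam θ ζ + i, h⟩ = η₀ ⟨sFn lam θ ζ + i, h⟩ := by
        intro i hi h
        have hpos : sFn lam θ ζ + i < sFn lam θ β :=
          lt_of_lt_of_le ((add_lt_add_iff_left _).mpr hi) (sFn_succ_le hζβ hζ)
        have hpos' : sFn lam θ ζ + i < sFn lam θ ε₁ :=
          hpos.trans_le (sFn_mono (le_max_left β ε₂))
        rw [hη _ h hpos', hf1 _ h hpos]
      have h1 : (F η).1 ⟨ζ, hζ⟩ = (F η₀).1 ⟨ζ, hζ⟩ := F_agree hF η η₀ ⟨ζ, hζ⟩ hblock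
      have h2 : y.1 ⟨ζ, hζ⟩ = μ ⟨ζ, hζβ⟩ := hyμ ζ hζβ hζ
      rw [h1, h2, hμdef]
    · push_neg at hζβ
      have hv : y.1 ⟨ζ, hζ⟩ < (θ ⟨ζ, hζ⟩).ord := y.2 _
      have hposlt : ∀ i, i < (θ (⟨ζ, hζ⟩ : Blw lam.ord)).ord →
          sFn lam θ ζ + i < sFn lam θ ε₁ := fun i hi =>
        lt_of_lt_of_le ((add_lt_add_iff_left _).mpr hi) (sFn_succ_le hζε hζ)
      by_cases hv0 : y.1 ⟨ζ, hζ⟩ = 0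
      · rw [hv0]
        refine (hF η ⟨ζ, hζ⟩).1 ?_
        intro i hi h
        have hne : ¬ (y.1 ⟨ζ, hζ⟩ = 1 + i) := by
          rw [hv0]
          intro h0
          exact (lt_of_lt_of_le zero_lt_one ((le_self_add : (1 : Ordinal.{0}) ≤ 1 + i))).ne h0
        rw [hη _ h (hposlt i hi), hf2 ζ hζ hζβ hζε i hi h, if_neg hne]
      · have h1v : (1 : Ordinal.{0}) ≤ y.1 ⟨ζ, hζ⟩ := Ordinal.one_le_iff_ne_zero.mpr hv0
        have hvi : 1 + (y.1 ⟨ζ, hζ⟩ - 1) = y.1 ⟨ζ, hζ⟩ := Ordinal.add_sub_cancel_of_le h1v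
        have hiθ : y.1 ⟨ζ, hζ⟩ - 1 < (θ ⟨ζ, hζ⟩).ord :=
          lt_of_le_of_lt (Ordinal.sub_le_self _ 1) hv
        have hpos : sFn lam θ ζ + (y.1 ⟨ζ, hζ⟩ - 1) < lam.ord := bc_pos_lt hreg hθ hζ hiθ
        have htrue : η ⟨sFn lam θ ζ + (y.1 ⟨ζ, hζ⟩ - 1), hpos⟩ = true := by
          rw [hη _ hpos (hposlt _ hiθ), hf2 ζ hζ hζβ hζε _ hiθ hpos, if_pos hvi.symm]
        have hfalse : ∀ j, j < y.1 ⟨ζ, hζ⟩ - 1 → ∀ h' : sFn lam θ ζ + j < lam.ord,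
            η ⟨sFn lam θ ζ + j, h'⟩ = false := by
          intro j hj h'
          have hjθ : j < (θ (⟨ζ, hζ⟩ : Blw lam.ord)).ord := hj.trans hiθ
          have hne : ¬ (y.1 ⟨ζ, hζ⟩ = 1 + j) := by
            intro hy'
            rw [← hvi] at hy'
            exact hj.ne' ((add_right_inj 1).mp hy')
          rw [hη _ h' (hposlt _ hjθ), hf2 ζ hζ hζβ hζε _ hjθ h', if_neg hne]
        have hfin := (hF η ⟨ζ, hζ⟩).2 (y.1 ⟨ζ, hζ⟩ - 1) hiθ hpos htrue hfalse
        rw [hfin, hvi]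
  set ν' : Blw (sFn lam θ ε₁) → Bool := (fun α => η₁ ⟨α.1, α.2.trans hsε₁⟩) with hν'def
  have hmem₁ : η₁ ∈ cylC lam.ord (sFn lam θ ε₁) ν' := by
    intro a hsa hao
    rw [hν'def]
  have hsub1 : cylC lam.ord (sFn lam θ ε₁) ν' ⊆ cylC lam.ord β ν := by
    intro η hη a haβ hao
    have h1 : a < sFn lam θ ε₁ :=
      lt_of_lt_of_le haβ (hβsβ.trans (sFn_mono (le_max_left β ε₂)))
    rw [hη a h1 hao, hν'def]
    simp only [hη₁def, dif_pos haβ]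
  have hdisj : ∀ η, η ∈ cylC lam.ord (sFn lam θ ε₁) ν' → F η ∉ U := by
    intro η hη hFU
    have hηag : ∀ (a : Ordinal.{0}) (h : a < lam.ord), a < sFn lam θ ε₁ →
        η ⟨a, h⟩ = η₁ ⟨a, h⟩ := by
      intro a h ha
      rw [hη a ha h, hν'def]
    have hFmem : F η ∈ cylP lam.ord θ ε₂ ρ := by
      intro a haε hao
      rw [hA η hηag a hao (lt_of_lt_of_le haε (le_max_right β ε₂))]
      exact hyt₂ a haε hao
    exact (ht₂sub hFmem) (subset_closure hFU)
  have hop : IsOpen (cylC lam.ord (sFn lam θ ε₁) ν') := hbC.isOpen ⟨_, hsε₁, ν', rfl⟩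
  have hclsub : closure (F ⁻¹' U) ⊆ (cylC lam.ord (sFn lam θ ε₁) ν')ᶜ := by
    refine closure_minimal ?_ hop.isClosed_compl
    intro z hz hzc
    exact hdisj z hzc hz
  exact (hclsub (htcl (hsub1 hmem₁))) hmem₁
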